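/- A mixed graph G=(V,D,B) is HTC-infinite-to-one if and only if the maximum number of directed paths from s to t in the flow network G_flow that are pairwise vertex-disjoint except at the common endpoints s and t is strictly less than |D| = Σ_{v∈V}|pa(v)|. -/

import Mathlib

open scoped Classical Matrix

/-- A mixed graph `G = (V, D, B)`: a finite vertex set `V`, a set `D` of directed
edges, and a symmetric set `B` of bidirected edges; no self-loops. -/
structure MixedGraph (V : Type*) [Fintype V] [DecidableEq V] where
  D : Finset (V × V)
  B : Finset (V × V)
  B_symm : ∀ v w : V, (v, w) ∈ B → (w, v) ∈ B
  D_irrefl : ∀ v : V, (v, v) ∉ D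
  B_irrefl : ∀ v : V, (v, v) ∉ B

namespace MixedGraph

variable {V : Type*} [Fintype V] [DecidableEq V]

/-- The parents of `v`: nodes `w` with `w → v ∈ D`. -/
def pa (G : MixedGraph V) (v : V) : Finset V :=
  Finset.univ.filter fun w => (w, v) ∈ G.D

/-- The siblings of `v`: nodes `w` with `w ↔ v ∈ B`. -/
def sib (G : MixedGraph V) (v : V) : Finset V :=
  Finset.univ.filter fun w => (w, v) ∈ G.B

/-- A trek: a walk with no colliding arrowheads.  The field `left` lists the nodes of the
left-hand side from top (head) to source (last); `right` lists the nodes of the right-hand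
side from top (head) to target (last); consecutive nodes in each list are joined by directed
edges pointing away from the head.  If `hasBidir` then the two heads are joined by a
bidirected edge, otherwise they coincide (the top node). -/
structure Trek (G : MixedGraph V) where
  left : List V
  right : List V
  left_ne : left ≠ []
  right_ne : right ≠ []
  hasBidir : Bool
  left_chain : left.Chain' fun a b => (a, b) ∈ G.D
  right_chain : right.Chain' fun a b => (a, b) ∈ G.D
  head_cond : if hasBidir then (left.head left_ne, right.head right_ne) ∈ G.B
              else left.head left_ne = right.head right_ne

namespace Trek

variable {G : MixedGraph V}

/-- The source of a trek. -/
def source (π : G.Trek) : V := π.left.getLast π.left_ne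

/-- The target of a trek. -/
def target (π : G.Trek) : V := π.right.getLast π.right_ne

/-- The left-hand side `Left(π)` of a trek, as a set of nodes. -/
def leftSet (π : G.Trek) : Finset V := π.left.toFinset

/-- The right-hand side `Right(π)` of a trek, as a set of nodes. -/
def rightSet (π : G.Trek) : Finset V := π.right.toFinset

/-- A half-trek is a trek whose left-hand side consists of exactly one node. -/
def IsHalfTrek (π : G.Trek) : Prop := π.leftSet.card = 1

/-- The number of directed edges traversed by the trek. -/
def nEdges (π : G.Trek) : ℕ := (π.left.length - 1) + (π.right.length - 1)

end Trek

/-- `htr v`: the set of nodes `w ∉ {v} ∪ sib(v)` reachable from `v` by a half-trek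
containing at least one directed edge. -/
def htr (G : MixedGraph V) (v : V) : Set V :=
  {w | w ≠ v ∧ w ∉ G.sib v ∧
    ∃ π : G.Trek, π.source = v ∧ π.target = w ∧ π.IsHalfTrek ∧ 1 ≤ π.nEdges}

/-- `f` encodes a system of treks from `Y` to `P`: treks with pairwise distinct sources
forming `Y` and pairwise distinct targets forming `P`. -/
def IsTrekSystem (G : MixedGraph V) (Y P : Finset V) (f : V → G.Trek) : Prop :=
  (∀ y ∈ Y, (f y).source = y) ∧
  (Y.image fun y => (f y).target) = P ∧
  ∀ y ∈ Y, ∀ y' ∈ Y, y ≠ y' → (f y).target ≠ (f y').target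

/-- The treks `f y`, `y ∈ Y`, have no sided intersection. -/
def NoSidedIntersection (G : MixedGraph V) (Y : Finset V) (f : V → G.Trek) : Prop :=
  ∀ y ∈ Y, ∀ y' ∈ Y, y ≠ y' →
    Disjoint (f y).leftSet (f y').leftSet ∧ Disjoint (f y).rightSet (f y').rightSet

/-- `Y` satisfies the half-trek criterion with respect to `v`. -/
def SatisfiesHTC (G : MixedGraph V) (v : V) (Y : Finset V) : Prop :=
  Y.card = (G.pa v).card ∧
  (∀ y ∈ Y, y ≠ v ∧ y ∉ G.sib v) ∧
  ∃ f : V → G.Trek, (∀ y ∈ Y, (f y).IsHalfTrek) ∧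
    G.IsTrekSystem Y (G.pa v) f ∧ G.NoSidedIntersection Y f

/-- `Y` satisfies the weak half-trek criterion with respect to `v`. -/
def SatisfiesWeakHTC (G : MixedGraph V) (v : V) (Y : Finset V) : Prop :=
  Y.card = (G.pa v).card ∧
  (∀ y ∈ Y, y ≠ v ∧ y ∉ G.sib v) ∧
  ∃ f : V → G.Trek, (∀ y ∈ Y, y ∈ G.htr v → (f y).IsHalfTrek) ∧
    G.IsTrekSystem Y (G.pa v) f ∧ G.NoSidedIntersection Y f

/-- `G` is HTC-identifiable. -/
def HTCIdentifiable (G : MixedGraph V) : Prop :=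
  ∃ Y : V → Finset V,
    (∀ v, G.SatisfiesHTC v (Y v)) ∧
    ∃ r : V → V → Prop, IsStrictTotalOrder V r ∧
      ∀ v w, w ∈ Y v → w ∈ G.htr v → r w v

/-- `G` is HTC-infinite-to-one. -/
def HTCInfiniteToOne (G : MixedGraph V) : Prop :=
  ∀ Y : V → Finset V,
    (∃ v, ¬ G.SatisfiesHTC v (Y v)) ∨ ∃ v w, v ∈ Y w ∧ w ∈ Y v

/-- `G` is acyclic: no directed cycle can be formed from the edges in `D`. -/
def Acyclic (G : MixedGraph V) : Prop :=
  ∀ v : V, ¬ Relation.TransGen (fun a b => (a, b) ∈ G.D) v v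

/-- `G` is simple: at most one edge between any pair of nodes. -/
def Simple (G : MixedGraph V) : Prop :=
  (∀ e ∈ G.D, e ∉ G.B) ∧ ∀ v w : V, (v, w) ∈ G.D → (w, v) ∉ G.D

/-- `ℝ^D_reg`: real matrices supported on `D` with `I - Λ` invertible. -/
def RDreg (G : MixedGraph V) : Set (Matrix V V ℝ) :=
  {Λ | (∀ v w, (v, w) ∉ G.D → Λ v w = 0) ∧ IsUnit (1 - Λ).det}

/-- `PD(B)`: positive definite symmetric matrices supported on the diagonal and `B`. -/
def PDB (G : MixedGraph V) : Set (Matrix V V ℝ) :=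
  {Ω | Ω.PosDef ∧ ∀ v w, v ≠ w → (v, w) ∉ G.B → Ω v w = 0}

/-- The parameter space `Θ = ℝ^D_reg × PD(B)`. -/
def Theta (G : MixedGraph V) : Set (Matrix V V ℝ × Matrix V V ℝ) :=
  {θ | θ.1 ∈ G.RDreg ∧ θ.2 ∈ G.PDB}

/-- The parametrization `φ(Λ, Ω) = (I-Λ)^{-T} Ω (I-Λ)^{-1}`. -/
noncomputable def phi {R : Type*} [CommRing R] (Λ Ω : Matrix V V R) : Matrix V V R :=
  ((1 - Λ)⁻¹)ᵀ * Ω * (1 - Λ)⁻¹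

/-- Evaluation of a polynomial in the coordinates `λ_vw` (left summand) and `ω_vw`
(right summand) at a parameter point `θ = (Λ, Ω)`. -/
noncomputable def evalParam (θ : Matrix V V ℝ × Matrix V V ℝ)
    (p : MvPolynomial ((V × V) ⊕ (V × V)) ℝ) : ℝ :=
  MvPolynomial.eval (Sum.elim (fun e => θ.1 e.1 e.2) (fun e => θ.2 e.1 e.2)) p

/-- `V₀` is a proper algebraic subset of `Θ`: the intersection with `Θ` of the zero set of a
polynomial in the coordinates that does not vanish identically on `Θ`. -/
def IsProperAlgebraic (G : MixedGraph V)
    (V₀ : Set (Matrix V V ℝ × Matrix V V ℝ)) : Prop :=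
  ∃ p : MvPolynomial ((V × V) ⊕ (V × V)) ℝ,
    (∃ θ ∈ G.Theta, evalParam θ p ≠ 0) ∧
    V₀ = {θ ∈ G.Theta | evalParam θ p = 0}

/-- Evaluation of a polynomial in the entries of a covariance matrix. -/
noncomputable def evalAtCov (S : Matrix V V ℝ) (p : MvPolynomial (V × V) ℝ) : ℝ :=
  MvPolynomial.eval (fun e => S e.1 e.2) p

/-- `G` is rationally identifiable: some rational map `ψ` (each coordinate a quotient of
polynomials in the entries of the covariance matrix) satisfies `ψ ∘ φ_G = id` off a proper
algebraic subset of `Θ`. -/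
def RationallyIdentifiable (G : MixedGraph V) : Prop :=
  ∃ V₀, G.IsProperAlgebraic V₀ ∧
    ∃ p q : ((V × V) ⊕ (V × V)) → MvPolynomial (V × V) ℝ,
      ∀ θ ∈ G.Theta \ V₀,
        (∀ i, evalAtCov (phi θ.1 θ.2) (q i) ≠ 0) ∧
        (∀ v w : V, θ.1 v w * evalAtCov (phi θ.1 θ.2) (q (Sum.inl (v, w)))
            = evalAtCov (phi θ.1 θ.2) (p (Sum.inl (v, w)))) ∧
        (∀ v w : V, θ.2 v w * evalAtCov (phi θ.1 θ.2) (q (Sum.inr (v, w)))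
            = evalAtCov (phi θ.1 θ.2) (p (Sum.inr (v, w))))

/-- `G` is generically identifiable: `φ_G` is injective off a proper algebraic subset. -/
def GenericallyIdentifiable (G : MixedGraph V) : Prop :=
  ∃ V₀, G.IsProperAlgebraic V₀ ∧
    Set.InjOn (fun θ : Matrix V V ℝ × Matrix V V ℝ => phi θ.1 θ.2) (G.Theta \ V₀)

/-- `φ_G` is generically infinite-to-one. -/
def GenInfiniteToOne (G : MixedGraph V) : Prop :=
  ∃ V₀, G.IsProperAlgebraic V₀ ∧
    ∀ θ ∈ G.Theta \ V₀,
      {θ' ∈ G.Theta | phi θ'.1 θ'.2 = phi θ.1 θ.2}.Infinite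

end MixedGraph

/-- There exist `k` directed paths from `s` to `t` in the network with edge relation `E`
that are pairwise vertex-disjoint except at the common endpoints `s` and `t` (each path
being simple). -/
def HasDisjointPaths {N : Type*} (E : N → N → Prop) (s t : N) (k : ℕ) : Prop :=
  ∃ P : Fin k → List N,
    (∀ i, (P i).Chain' E ∧ (P i).head? = some s ∧ (P i).getLast? = some t ∧
      2 ≤ (P i).length ∧ (P i).Nodup) ∧
    ∀ i j, i ≠ j → ∀ x ∈ ((P i).drop 1).dropLast, x ∉ ((P j).drop 1).dropLast

/-- Nodes of the flow network `G_flow`: a source, a sink, a left-hand copy `L {v, w}` for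
each unordered pair, and a right-hand copy `R v w` (i.e. `R_v(w)`) for ordered pairs. -/
inductive FlowNode2 (V : Type*) where
  | s : FlowNode2 V
  | t : FlowNode2 V
  | L : Sym2 V → FlowNode2 V
  | R : V → V → FlowNode2 V

/-- The unordered pair `e = {v, w}` indexes a left-hand node of `G_flow`: it must satisfy
`v ≠ w` and `v ↔ w ∉ B`. -/
def validPair {V : Type*} [Fintype V] [DecidableEq V] (G : MixedGraph V)
    (e : Sym2 V) : Prop :=
  ¬ e.IsDiag ∧ ∀ v w : V, e = Sym2.mk v w → (v, w) ∉ G.B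

/-- Edges of the flow network `G_flow`. -/
def flowEdge2 {V : Type*} [Fintype V] [DecidableEq V] (G : MixedGraph V) :
    FlowNode2 V → FlowNode2 V → Prop
  | FlowNode2.s, FlowNode2.L e => validPair G e
  | FlowNode2.L e, FlowNode2.R v u =>
      validPair G e ∧ ∃ w, e = Sym2.mk v w ∧ (u = w ∨ (w, u) ∈ G.B)
  | FlowNode2.R v w, FlowNode2.R v' u => v = v' ∧ (w, u) ∈ G.D
  | FlowNode2.R v w, FlowNode2.t => (w, v) ∈ G.D
  | _, _ => False

section Aux

variable {V : Type*} [Fintype V] [DecidableEq V]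

/-- Any nonempty chain can be shortened to a duplicate-free chain with the same
endpoints and a subset of members. -/
private lemma chain'_dedup {N : Type*} {R : N → N → Prop} :
    ∀ (n : ℕ) (l : List N), l.length ≤ n → l.Chain' R →
      ∃ l' : List N, l'.Chain' R ∧ l'.Nodup ∧ l'.head? = l.head? ∧
        l'.getLast? = l.getLast? ∧ ∀ x ∈ l', x ∈ l := by
  intro n
  induction n with
  | zero =>
    intro l hl _
    have : l = [] := List.length_eq_zero_iff.1 (Nat.le_zero.1 hl)
    subst this
    exact ⟨[], by simp [List.Chain']⟩
  | succ n ih =>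
    intro l hlen hc
    match l with
    | [] => exact ⟨[], by simp [List.Chain']⟩
    | x :: xs =>
      by_cases hx : x ∈ xs
      · obtain ⟨u, v, rfl⟩ := List.append_of_mem hx
        have hsuf : (x :: v) <:+ (x :: (u ++ x :: v)) :=
          (List.suffix_append u (x :: v)).trans (List.suffix_cons x _)
        have hcv : (x :: v).Chain' R := hc.suffix hsuf
        have hlenv : (x :: v).length ≤ n := by
          simp only [List.length_cons, List.length_append] at hlen ⊢
          omega
        obtain ⟨l', h1, h2, h3, h4, h5⟩ := ih (x :: v) hlenv hcv
        refine ⟨l', h1, h2, by simpa using h3, ?_, fun a ha => ?_⟩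
        · rw [h4]
          show (x :: v).getLast? = ((x :: u) ++ (x :: v)).getLast?
          rw [List.getLast?_append_of_ne_nil _ (by simp : (x :: v) ≠ [])]
        · have := h5 a ha
          simp only [List.mem_cons, List.mem_append] at this ⊢
          tauto
      · match xs, hc with
        | [], _ => exact ⟨[x], by simp [List.Chain']⟩
        | z :: zs, hc =>
          have hcz : (z :: zs).Chain' R := hc.tail
          obtain ⟨l', h1, h2, h3, h4, h5⟩ := ih (z :: zs)
            (by simp only [List.length_cons] at hlen ⊢; omega) hcz
          have hl'ne : l' ≠ [] := by
            intro h; rw [h] at h3; simp at h3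
          refine ⟨x :: l', ?_, ?_, by simp, ?_, ?_⟩
          · refine List.isChain_cons.2 ⟨fun y hy => ?_, h1⟩
            have : z = y := by
              rw [h3] at hy; simpa using hy
            subst this
            exact (List.isChain_cons_cons.1 hc).1
          · refine List.nodup_cons.2 ⟨fun hmem => hx ?_, h2⟩
            exact h5 x hmem
          · obtain ⟨a, as, rfl⟩ : ∃ a as, l' = a :: as := by
              cases l' with
              | nil => exact absurd rfl hl'ne
              | cons a as => exact ⟨a, as, rfl⟩
            rw [List.getLast?_cons_cons, h4, List.getLast?_cons_cons]
          · intro a ha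
            rcases List.mem_cons.1 ha with rfl | ha
            · simp
            · simp [h5 a ha]

/-- A `D`-chain whose vertex set is a single point is a singleton list. -/
private lemma chain_card_one {G : MixedGraph V} :
    ∀ (l : List V), l.Chain' (fun a b => (a, b) ∈ G.D) → l.toFinset.card = 1 →
      ∃ y, l = [y] := by
  intro l hc hcard
  match l with
  | [] => simp at hcard
  | [y] => exact ⟨y, rfl⟩
  | a :: b :: m =>
    have hab : (a, b) ∈ G.D := (List.isChain_cons_cons.1 hc).1
    have hne : a ≠ b := by
      rintro rfl; exact G.D_irrefl a hab
    have hsub : ({a, b} : Finset V) ⊆ (a :: b :: m).toFinset := by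
      intro x hx
      simp only [Finset.mem_insert, Finset.mem_singleton] at hx
      rcases hx with rfl | rfl <;> simp
    have h2 : ({a, b} : Finset V).card = 2 := Finset.card_pair hne
    have := Finset.card_le_card hsub
    omega

/-- `|D| = Σ_v |pa(v)|`. -/
private lemma card_D_eq (G : MixedGraph V) :
    G.D.card = ∑ v, (G.pa v).card := by
  rw [Finset.card_eq_sum_card_fiberwise (f := Prod.snd) (t := Finset.univ)
    (fun x _ => Finset.mem_univ _)]
  refine Finset.sum_congr rfl fun v _ => ?_
  refine Finset.card_bij (fun e _ => e.1) ?_ ?_ ?_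
  · intro e he
    simp only [Finset.mem_filter] at he
    simp only [MixedGraph.pa, Finset.mem_filter, Finset.mem_univ, true_and]
    have h := he.1
    rw [← he.2]
    simpa using h
  · intro e he e' he' h
    simp only [Finset.mem_filter] at he he'
    exact Prod.ext h (he.2.trans he'.2.symm)
  · intro w hw
    simp only [MixedGraph.pa, Finset.mem_filter, Finset.mem_univ, true_and] at hw
    exact ⟨(w, v), by simp [hw], rfl⟩

private lemma chainR (G : MixedGraph V) (v : V) :
    ∀ (us : List V), us.Chain' (fun a b => (a, b) ∈ G.D) →
      (∀ h : us ≠ [], (us.getLast h, v) ∈ G.D) →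
      ((us.map (FlowNode2.R v) ++ [FlowNode2.t]) : List (FlowNode2 V)).Chain' (flowEdge2 G) := by
  intro us
  induction us with
  | nil => simp [List.Chain']
  | cons a l ih =>
    intro hc hl
    cases l with
    | nil =>
      have h1 : (a, v) ∈ G.D := hl (by simp)
      simp only [List.map_cons, List.map_nil, List.nil_append, List.cons_append]
      exact List.isChain_cons_cons.2 ⟨h1, List.isChain_singleton _⟩
    | cons b m =>
      replace hc := List.isChain_cons_cons.1 hc
      have h2 := ih hc.2 (fun h => by
        have h3 := hl (by simp)
        rwa [List.getLast_cons h] at h3)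
      simp only [List.map_cons, List.cons_append] at h2 ⊢
      exact List.isChain_cons_cons.2 ⟨⟨rfl, hc.1⟩, h2⟩

private lemma chainFull (G : MixedGraph V) (e : Sym2 V) (v : V) (us : List V) (hus : us ≠ [])
    (hvp : validPair G e)
    (h0 : ∃ w, e = Sym2.mk v w ∧ (us.head hus = w ∨ (w, us.head hus) ∈ G.B))
    (hchain : us.Chain' fun a b => (a, b) ∈ G.D) (hlast : (us.getLast hus, v) ∈ G.D) :
    ((FlowNode2.s :: FlowNode2.L e :: (us.map (FlowNode2.R v) ++ [FlowNode2.t])) :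
      List (FlowNode2 V)).Chain' (flowEdge2 G) := by
  obtain ⟨u, l, rfl⟩ : ∃ u l, us = u :: l := by
    cases us with
    | nil => exact absurd rfl hus
    | cons u l => exact ⟨u, l, rfl⟩
  refine List.isChain_cons_cons.2 ⟨hvp, ?_⟩
  simp only [List.map_cons, List.cons_append]
  refine List.isChain_cons_cons.2 ⟨⟨hvp, ?_⟩, ?_⟩
  · simpa using h0
  · have h4 := chainR G v (u :: l) hchain (fun _ => hlast)
    simpa [List.Chain'] using h4

private lemma RtoT (G : MixedGraph V) :
    ∀ (P : List (FlowNode2 V)) (v u : V),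
      ((FlowNode2.R v u :: P) : List (FlowNode2 V)).Chain' (flowEdge2 G) →
      (FlowNode2.R v u :: P).getLast? = some FlowNode2.t →
      ∃ (us : List V) (hus : us ≠ []),
        FlowNode2.R v u :: P = us.map (FlowNode2.R v) ++ [FlowNode2.t] ∧
        us.head hus = u ∧
        us.Chain' (fun a b => (a, b) ∈ G.D) ∧ (us.getLast hus, v) ∈ G.D := by
  intro P
  induction P with
  | nil => intro v u _ hl; simp at hl
  | cons x Q ih =>
    intro v u hc hl
    have hE := (List.isChain_cons_cons.1 hc).1
    have hc2 := (List.isChain_cons_cons.1 hc).2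
    match x, hE, hc2, hl with
    | FlowNode2.s, hE, _, _ => exact hE.elim
    | FlowNode2.L _, hE, _, _ => exact hE.elim
    | FlowNode2.t, hE, hc2, hl =>
      cases Q with
      | nil =>
        exact ⟨[u], by simp, by simp, rfl, List.isChain_singleton _, by simpa [flowEdge2] using hE⟩
      | cons z Q' =>
        have h2 := (List.isChain_cons_cons.1 hc2).1
        exact absurd h2 (by cases z <;> simp [flowEdge2])
    | FlowNode2.R v' u', hE, hc2, hl =>
      obtain ⟨rfl, hD⟩ := hE
      obtain ⟨us, hus, heq, hhead, hch, hla⟩ := ih v u' hc2 (by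
        rw [List.getLast?_cons_cons] at hl; exact hl)
      obtain ⟨a, as, rfl⟩ : ∃ a as, us = a :: as := by
        cases us with
        | nil => exact absurd rfl hus
        | cons a as => exact ⟨a, as, rfl⟩
      have ha : a = u' := hhead
      subst ha
      refine ⟨u :: a :: as, by simp, ?_, rfl, ?_, ?_⟩
      · rw [List.map_cons, List.cons_append, ← heq]
      · exact List.isChain_cons_cons.2 ⟨hD, hch⟩
      · rwa [List.getLast_cons (by simp)]

private lemma path_decomp (G : MixedGraph V) (P : List (FlowNode2 V))
    (hc : P.Chain' (flowEdge2 G)) (hh : P.head? = some FlowNode2.s)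
    (hl : P.getLast? = some FlowNode2.t) :
    ∃ (e : Sym2 V) (v : V) (us : List V) (hus : us ≠ []),
      P = FlowNode2.s :: FlowNode2.L e :: (us.map (FlowNode2.R v) ++ [FlowNode2.t]) ∧
      validPair G e ∧
      (∃ w, e = Sym2.mk v w ∧ (us.head hus = w ∨ (w, us.head hus) ∈ G.B)) ∧
      us.Chain' (fun a b => (a, b) ∈ G.D) ∧ (us.getLast hus, v) ∈ G.D := by
  obtain ⟨P₁, rfl⟩ : ∃ P₁, P = FlowNode2.s :: P₁ := by
    cases P with
    | nil => simp at hh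
    | cons a P₁ =>
      have : a = FlowNode2.s := by simpa using hh
      exact ⟨P₁, by rw [this]⟩
  cases P₁ with
  | nil => simp at hl
  | cons x P₂ =>
    have hE := (List.isChain_cons_cons.1 hc).1
    have hc2 := (List.isChain_cons_cons.1 hc).2
    match x, hE, hc2, hl with
    | FlowNode2.s, hE, _, _ => exact hE.elim
    | FlowNode2.t, hE, _, _ => exact hE.elim
    | FlowNode2.R _ _, hE, _, _ => exact hE.elim
    | FlowNode2.L e, hE, hc2, hl =>
      cases P₂ with
      | nil => simp at hl
      | cons x₂ P₃ =>
        have hE2 := (List.isChain_cons_cons.1 hc2).1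
        have hc3 := (List.isChain_cons_cons.1 hc2).2
        match x₂, hE2, hc3, hl with
        | FlowNode2.s, hE2, _, _ => exact hE2.elim
        | FlowNode2.t, hE2, _, _ => exact hE2.elim
        | FlowNode2.L _, hE2, _, _ => exact hE2.elim
        | FlowNode2.R v u, hE2, hc3, hl =>
          obtain ⟨hvp2, w, hew, hwB⟩ := hE2
          obtain ⟨us, hus, heq, hhead, hch, hla⟩ := RtoT G P₃ v u hc3 (by
            rw [List.getLast?_cons_cons, List.getLast?_cons_cons] at hl; exact hl)
          refine ⟨e, v, us, hus, by rw [← heq], hE, ⟨w, hew, ?_⟩, hch, hla⟩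
          rw [hhead]
          exact hwB

private def mkHalf (G : MixedGraph V) (y : V) (us : List V) (hus : us ≠ [])
    (hch : us.Chain' fun a b => (a, b) ∈ G.D)
    (hcond : us.head hus = y ∨ (y, us.head hus) ∈ G.B) : G.Trek where
  left := [y]
  right := us
  left_ne := by simp
  right_ne := hus
  hasBidir := !(decide (us.head hus = y))
  left_chain := by simp [List.Chain']
  right_chain := hch
  head_cond := by
    by_cases h : us.head hus = y
    · simp [h]
    · simp only [h, decide_eq_false h, Bool.not_false, if_true]
      simpa using hcond.resolve_left h

private lemma mkHalf_source (G : MixedGraph V) (y : V) (us : List V) (hus : us ≠ [])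
    (hch : us.Chain' fun a b => (a, b) ∈ G.D)
    (hcond : us.head hus = y ∨ (y, us.head hus) ∈ G.B) :
    (mkHalf G y us hus hch hcond).source = y := rfl

private lemma mkHalf_target (G : MixedGraph V) (y : V) (us : List V) (hus : us ≠ [])
    (hch : us.Chain' fun a b => (a, b) ∈ G.D)
    (hcond : us.head hus = y ∨ (y, us.head hus) ∈ G.B) :
    (mkHalf G y us hus hch hcond).target = us.getLast hus := rfl

private lemma mkHalf_leftSet (G : MixedGraph V) (y : V) (us : List V) (hus : us ≠ [])
    (hch : us.Chain' fun a b => (a, b) ∈ G.D)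
    (hcond : us.head hus = y ∨ (y, us.head hus) ∈ G.B) :
    (mkHalf G y us hus hch hcond).leftSet = {y} := by
  simp [MixedGraph.Trek.leftSet, mkHalf]

private lemma mkHalf_rightSet (G : MixedGraph V) (y : V) (us : List V) (hus : us ≠ [])
    (hch : us.Chain' fun a b => (a, b) ∈ G.D)
    (hcond : us.head hus = y ∨ (y, us.head hus) ∈ G.B) :
    (mkHalf G y us hus hch hcond).rightSet = us.toFinset := rfl

private lemma mkHalf_isHalf (G : MixedGraph V) (y : V) (us : List V) (hus : us ≠ [])
    (hch : us.Chain' fun a b => (a, b) ∈ G.D)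
    (hcond : us.head hus = y ∨ (y, us.head hus) ∈ G.B) :
    (mkHalf G y us hus hch hcond).IsHalfTrek := by
  simp [MixedGraph.Trek.IsHalfTrek, mkHalf_leftSet]

private lemma trek_left_eq {G : MixedGraph V} (π : G.Trek) (h : π.IsHalfTrek) :
    π.left = [π.source] := by
  obtain ⟨y, hy⟩ := chain_card_one π.left π.left_chain h
  have hs : π.source = y := by simp [MixedGraph.Trek.source, hy]
  rw [hy, hs]

private lemma trek_head_cases {G : MixedGraph V} (π : G.Trek) {y : V} (hl : π.left = [y]) :
    π.right.head π.right_ne = y ∨ (y, π.right.head π.right_ne) ∈ G.B := by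
  have hc := π.head_cond
  have hhead : π.left.head π.left_ne = y := by
    have h1 : π.left.head? = some y := by rw [hl]; rfl
    rw [List.head?_eq_head π.left_ne] at h1
    exact Option.some_injective _ h1
  by_cases hb : π.hasBidir
  · simp only [hb, if_true] at hc
    rw [hhead] at hc
    exact Or.inr hc
  · simp only [hb, if_false] at hc
    rw [hhead] at hc
    exact Or.inl hc.symm

private lemma trek_target_getLast {G : MixedGraph V} (π : G.Trek) :
    π.right.getLast? = some π.target :=
  List.getLast?_eq_getLast_of_ne_nil π.right_ne

private lemma dir2 (G : MixedGraph V) (k : ℕ)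
    (h : HasDisjointPaths (flowEdge2 G) FlowNode2.s FlowNode2.t k) (hk : G.D.card ≤ k) :
    ∃ Y : V → Finset V, (∀ v, G.SatisfiesHTC v (Y v)) ∧ ¬ ∃ v w, v ∈ Y w ∧ w ∈ Y v := by
  obtain ⟨P, hP, hdisj⟩ := h
  have hdec : ∀ i : Fin k, ∃ (e : Sym2 V) (v : V) (us : List V) (hus : us ≠ []),
      P i = FlowNode2.s :: FlowNode2.L e :: (us.map (FlowNode2.R v) ++ [FlowNode2.t]) ∧
      validPair G e ∧
      (∃ w, e = Sym2.mk v w ∧ (us.head hus = w ∨ (w, us.head hus) ∈ G.B)) ∧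
      us.Chain' (fun a b => (a, b) ∈ G.D) ∧ (us.getLast hus, v) ∈ G.D :=
    fun i => path_decomp G (P i) (hP i).1 (hP i).2.1 (hP i).2.2.1
  choose e v us hus hPeq hvp hw hch hla using hdec
  choose y hey hyB using hw
  have hint : ∀ i, ((P i).drop 1).dropLast
      = FlowNode2.L (e i) :: (us i).map (FlowNode2.R (v i)) := by
    intro i
    rw [hPeq i]
    show (FlowNode2.L (e i) :: ((us i).map (FlowNode2.R (v i)) ++ [FlowNode2.t])).dropLast = _
    rw [← List.cons_append, List.dropLast_concat]
  have hdisj' : ∀ i j, i ≠ j → ∀ x : FlowNode2 V,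
      x ∈ FlowNode2.L (e i) :: (us i).map (FlowNode2.R (v i)) →
      x ∉ FlowNode2.L (e j) :: (us j).map (FlowNode2.R (v j)) := by
    intro i j hij x hxi hxj
    have hx := hdisj i j hij x (by rw [hint i]; exact hxi)
    exact hx (by rw [hint j]; exact hxj)
  have hLinj : ∀ i j, e i = e j → i = j := by
    intro i j hij
    by_contra hne
    exact hdisj' i j hne (FlowNode2.L (e i)) (by simp) (by simp [hij])
  have hRinj : ∀ i j (u : V), u ∈ us i → u ∈ us j → v i = v j → i = j := by
    intro i j u hui huj hv
    by_contra hne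
    exact hdisj' i j hne (FlowNode2.R (v i) u)
      (by simp only [List.mem_cons, List.mem_map]; exact Or.inr ⟨u, hui, rfl⟩)
      (by rw [hv]; simp only [List.mem_cons, List.mem_map]; exact Or.inr ⟨u, huj, rfl⟩)
  have hφinj : Function.Injective (fun i => (((us i).getLast (hus i), v i) : V × V)) := by
    intro i j hij
    simp only [Prod.mk.injEq] at hij
    refine hRinj i j _ (List.getLast_mem (hus i)) ?_ hij.2
    rw [hij.1]
    exact List.getLast_mem (hus j)
  have hkle : k ≤ G.D.card := by
    have h1 := Finset.card_le_card_of_injOn (s := (Finset.univ : Finset (Fin k)))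
      (t := G.D) (fun i => (((us i).getLast (hus i), v i) : V × V))
      (fun i _ => hla i) (fun i _ j _ hij => hφinj hij)
    simpa using h1
  have hkeq : k = G.D.card := le_antisymm hkle hk
  have hsurj : ∀ p vv, (p, vv) ∈ G.D → ∃ i, v i = vv ∧ (us i).getLast (hus i) = p := by
    intro p vv hpv
    have himg : (Finset.univ.image fun i : Fin k => (((us i).getLast (hus i), v i) : V × V))
        = G.D := by
      apply Finset.eq_of_subset_of_card_le
      · intro x hx
        simp only [Finset.mem_image] at hx
        obtain ⟨i, _, rfl⟩ := hx
        exact hla i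
      · rw [Finset.card_image_of_injective _ hφinj]
        simp [hkeq]
    rw [← himg] at hpv
    simp only [Finset.mem_image, Prod.mk.injEq] at hpv
    obtain ⟨i, _, h1, h2⟩ := hpv
    exact ⟨i, h2, h1⟩
  have hpa : ∀ {z vv : V}, z ∈ G.pa vv ↔ (z, vv) ∈ G.D := by
    intro z vv; simp [MixedGraph.pa]
  have hsibm : ∀ {z vv : V}, z ∈ G.sib vv ↔ (z, vv) ∈ G.B := by
    intro z vv; simp [MixedGraph.sib]
  have hyv : ∀ i, y i ≠ v i := by
    intro i heqvy
    exact (hvp i).1 (by rw [hey i]; exact Sym2.mk_isDiag_iff.2 heqvy.symm)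
  have hyB' : ∀ i, (y i, v i) ∉ G.B :=
    fun i => (hvp i).2 (y i) (v i) ((hey i).trans Sym2.eq_swap)
  have huniq : ∀ i j, v i = v j → y i = y j → i = j := by
    intro i j h1 h2
    exact hLinj i j (by rw [hey i, hey j, h1, h2])
  set Y : V → Finset V :=
    fun vv => ((Finset.univ : Finset (Fin k)).filter (fun i => v i = vv)).image y with hYdef
  have hmemY : ∀ vv z, z ∈ Y vv ↔ ∃ i, v i = vv ∧ y i = z := by
    intro vv z
    simp [hYdef]
  refine ⟨Y, fun vv => ?_, ?_⟩
  · -- SatisfiesHTC vv (Y vv)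
    set I : Finset (Fin k) := (Finset.univ : Finset (Fin k)).filter (fun i => v i = vv)
      with hIdef
    have hmemI : ∀ i, i ∈ I ↔ v i = vv := by intro i; simp [hIdef]
    have hIimg : I.image (fun i => (us i).getLast (hus i)) = G.pa vv := by
      apply Finset.Subset.antisymm
      · intro p hp
        simp only [Finset.mem_image] at hp
        obtain ⟨i, hvi, rfl⟩ := hp
        rw [hmemI] at hvi
        exact hpa.2 (hvi ▸ hla i)
      · intro p hp
        obtain ⟨i, hvi, hgl⟩ := hsurj p vv (hpa.1 hp)
        exact Finset.mem_image.2 ⟨i, (hmemI i).2 hvi, hgl⟩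
    have hIcard : I.card = (G.pa vv).card := by
      rw [← hIimg]
      refine (Finset.card_image_of_injOn ?_).symm
      intro i hi j hj hij
      have hij' : (us i).getLast (hus i) = (us j).getLast (hus j) := hij
      exact hRinj i j _ (List.getLast_mem (hus i))
        (by rw [hij']; exact List.getLast_mem (hus j))
        (((hmemI i).1 hi).trans ((hmemI j).1 hj).symm)
    have hYI : Y vv = I.image y := rfl
    have hYcard : (Y vv).card = I.card := by
      rw [hYI]
      refine Finset.card_image_of_injOn ?_
      intro i hi j hj hij
      exact huniq i j (((hmemI i).1 hi).trans ((hmemI j).1 hj).symm) hij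
    classical
    set f : V → G.Trek := fun z =>
      if hz : ∃ i, v i = vv ∧ y i = z then
        mkHalf G (y hz.choose) (us hz.choose) (hus hz.choose) (hch hz.choose) (hyB hz.choose)
      else mkHalf G vv [vv] (by simp) (by simp [List.Chain']) (Or.inl rfl) with hfdef
    have hf_eq : ∀ i, v i = vv → f (y i) = mkHalf G (y i) (us i) (hus i) (hch i) (hyB i) := by
      intro i hvi
      have hz : ∃ j, v j = vv ∧ y j = y i := ⟨i, hvi, rfl⟩
      have hi0 : hz.choose = i :=
        huniq _ _ (hz.choose_spec.1.trans hvi.symm) hz.choose_spec.2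
      rw [hfdef]
      simp only [dif_pos hz]
      exact congrArg (fun j => mkHalf G (y j) (us j) (hus j) (hch j) (hyB j)) hi0
    refine ⟨hYcard.trans hIcard, ?_, f, ?_, ⟨?_, ?_, ?_⟩, ?_⟩
    · -- each y ∈ Y vv satisfies y ≠ vv and y ∉ sib vv
      intro z hz
      obtain ⟨i, hvi, rfl⟩ := (hmemY vv z).1 hz
      exact ⟨by rw [← hvi]; exact hyv i, by rw [hsibm, ← hvi]; exact hyB' i⟩
    · -- half treks
      intro z hz
      obtain ⟨i, hvi, rfl⟩ := (hmemY vv z).1 hz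
      rw [hf_eq i hvi]
      exact mkHalf_isHalf G _ _ _ _ _
    · -- sources
      intro z hz
      obtain ⟨i, hvi, rfl⟩ := (hmemY vv z).1 hz
      rw [hf_eq i hvi]
      rfl
    · -- image of targets
      rw [hYI, Finset.image_image]
      rw [← hIimg]
      refine Finset.image_congr ?_
      intro i hi
      simp only [Finset.mem_coe] at hi
      show (f (y i)).target = (us i).getLast (hus i)
      rw [hf_eq i ((hmemI i).1 hi)]
      rfl
    · -- injective targets
      intro z hz z' hz' hne
      obtain ⟨i, hvi, rfl⟩ := (hmemY vv z).1 hz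
      obtain ⟨j, hvj, rfl⟩ := (hmemY vv z').1 hz'
      rw [hf_eq i hvi, hf_eq j hvj, mkHalf_target, mkHalf_target]
      intro hgl
      exact hne (congrArg y (hRinj i j _ (List.getLast_mem (hus i))
        (by rw [hgl]; exact List.getLast_mem (hus j)) (hvi.trans hvj.symm)))
    · -- no sided intersection
      intro z hz z' hz' hne
      obtain ⟨i, hvi, rfl⟩ := (hmemY vv z).1 hz
      obtain ⟨j, hvj, rfl⟩ := (hmemY vv z').1 hz'
      rw [hf_eq i hvi, hf_eq j hvj]
      constructor
      · rw [mkHalf_leftSet, mkHalf_leftSet]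
        simpa using hne
      · rw [mkHalf_rightSet, mkHalf_rightSet]
        rw [Finset.disjoint_left]
        intro u hui huj
        refine hne (congrArg y (hRinj i j u ?_ ?_ (hvi.trans hvj.symm)))
        · exact List.mem_toFinset.1 hui
        · exact List.mem_toFinset.1 huj
  · -- no mutual pair
    rintro ⟨a, b, hab, hba⟩
    obtain ⟨i, hvi, hyi⟩ := (hmemY b a).1 hab
    obtain ⟨j, hvj, hyj⟩ := (hmemY a b).1 hba
    have hij : i = j := hLinj i j (by rw [hey i, hey j, hvi, hyi, hvj, hyj, Sym2.eq_swap])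
    subst hij
    exact hyv i (by rw [hyi, ← hvj])

private lemma dir1 (G : MixedGraph V) (Y : V → Finset V)
    (hHTC : ∀ v, G.SatisfiesHTC v (Y v))
    (hmut : ¬ ∃ v w, v ∈ Y w ∧ w ∈ Y v) :
    HasDisjointPaths (flowEdge2 G) FlowNode2.s FlowNode2.t G.D.card := by
  have hpa : ∀ {z vv : V}, z ∈ G.pa vv ↔ (z, vv) ∈ G.D := by
    intro z vv; simp [MixedGraph.pa]
  have hsibm : ∀ {z vv : V}, z ∈ G.sib vv ↔ (z, vv) ∈ G.B := by
    intro z vv; simp [MixedGraph.sib]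
  choose f hhalf hsys hnsi using fun v => (hHTC v).2.2
  have hYcond : ∀ v z, z ∈ Y v → z ≠ v ∧ z ∉ G.sib v := fun v => (hHTC v).2.1
  have hsrc : ∀ v z, z ∈ Y v → (f v z).source = z := fun v => (hsys v).1
  have himg : ∀ v, ((Y v).image fun z => (f v z).target) = G.pa v := fun v => (hsys v).2.1
  have hex : ∀ v p, p ∈ G.pa v → ∃ z, z ∈ Y v ∧ (f v z).target = p := by
    intro v p hp
    rw [← himg v] at hp
    simpa using Finset.mem_image.1 hp
  choose! yc hycY hyct using hex
  have hleft : ∀ v z, z ∈ Y v → (f v z).left = [z] := by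
    intro v z hz
    have h1 := trek_left_eq (f v z) (hhalf v z hz)
    rwa [hsrc v z hz] at h1
  have hrex : ∀ v z, ∃ rsl : List V, rsl.Chain' (fun a b => (a, b) ∈ G.D) ∧ rsl.Nodup ∧
      rsl.head? = (f v z).right.head? ∧ rsl.getLast? = some ((f v z).target) ∧
      ∀ x ∈ rsl, x ∈ (f v z).right := by
    intro v z
    obtain ⟨rsl, h1, h2, h3, h4, h5⟩ := chain'_dedup (f v z).right.length (f v z).right
      le_rfl (f v z).right_chain
    exact ⟨rsl, h1, h2, h3, h4.trans (trek_target_getLast (f v z)), h5⟩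
  choose rs hrsch hrsnd hrshd hrsgl hrsmem using hrex
  have hrsne : ∀ v z, rs v z ≠ [] := by
    intro v z h
    have h1 := hrsgl v z
    rw [h] at h1
    simp at h1
  have hhead' : ∀ v z, z ∈ Y v →
      ((rs v z).head (hrsne v z) = z ∨ (z, (rs v z).head (hrsne v z)) ∈ G.B) := by
    intro v z hz
    have h1 := trek_head_cases (f v z) (hleft v z hz)
    have h2 : (rs v z).head (hrsne v z) = (f v z).right.head (f v z).right_ne := by
      have h3 := hrshd v z
      rw [List.head?_eq_head (hrsne v z), List.head?_eq_head (f v z).right_ne] at h3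
      exact Option.some_injective _ h3
    rw [h2]
    exact h1
  have hlastrs : ∀ v z, (rs v z).getLast (hrsne v z) = (f v z).target := by
    intro v z
    have h1 := hrsgl v z
    rw [List.getLast?_eq_getLast_of_ne_nil (hrsne v z)] at h1
    exact Option.some_injective _ h1
  -- facts about the chosen sources
  have hzmem : ∀ p v, (p, v) ∈ G.D → yc v p ∈ Y v := fun p v hd => hycY v p (hpa.2 hd)
  have hztgt : ∀ p v, (p, v) ∈ G.D → (f v (yc v p)).target = p :=
    fun p v hd => hyct v p (hpa.2 hd)
  have hzinj : ∀ v p p', (p, v) ∈ G.D → (p', v) ∈ G.D → yc v p = yc v p' → p = p' := by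
    intro v p p' h1 h2 h3
    rw [← hztgt p v h1, ← hztgt p' v h2, h3]
  have hvalid : ∀ p v, (p, v) ∈ G.D → validPair G (Sym2.mk v (yc v p)) := by
    intro p v hd
    have hz := hzmem p v hd
    obtain ⟨hne, hnsib⟩ := hYcond v (yc v p) hz
    constructor
    · rw [Sym2.mk_isDiag_iff]
      exact fun h => hne h.symm
    · intro a b hab
      rw [Sym2.eq_iff] at hab
      rcases hab with ⟨rfl, rfl⟩ | ⟨h1, h2⟩
      · intro hB
        exact hnsib (hsibm.2 (G.B_symm _ _ hB))
      · subst h1; subst h2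
        intro hB
        exact hnsib (hsibm.2 hB)
  -- the path associated to an edge (p, v) ∈ D
  set path : V × V → List (FlowNode2 V) := fun d =>
    FlowNode2.s :: FlowNode2.L (Sym2.mk d.2 (yc d.2 d.1)) ::
      ((rs d.2 (yc d.2 d.1)).map (FlowNode2.R d.2) ++ [FlowNode2.t]) with hpathdef
  have hchainp : ∀ p v, (p, v) ∈ G.D → (path (p, v)).Chain' (flowEdge2 G) := by
    intro p v hd
    refine chainFull G _ v _ (hrsne v (yc v p)) (hvalid p v hd)
      ⟨yc v p, rfl, hhead' v _ (hzmem p v hd)⟩ (hrsch v _) ?_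
    rw [hlastrs v _, hztgt p v hd]
    exact hd
  have hinterior : ∀ d : V × V, ((path d).drop 1).dropLast
      = FlowNode2.L (Sym2.mk d.2 (yc d.2 d.1)) :: (rs d.2 (yc d.2 d.1)).map (FlowNode2.R d.2) := by
    intro d
    rw [hpathdef]
    show (FlowNode2.L _ :: (_ ++ [FlowNode2.t])).dropLast = _
    rw [← List.cons_append, List.dropLast_concat]
  have hnodupp : ∀ d : V × V, (path d).Nodup := by
    intro d
    rw [hpathdef]
    have hmap : ((rs d.2 (yc d.2 d.1)).map (FlowNode2.R d.2)).Nodup :=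
      (hrsnd d.2 (yc d.2 d.1)).map (fun a b h => by simpa using h)
    refine List.nodup_cons.2 ⟨by simp, List.nodup_cons.2 ⟨by simp, ?_⟩⟩
    rw [List.nodup_append]
    exact ⟨hmap, by simp, by simp⟩
  -- disjointness of two paths for distinct edges
  have hdisjp : ∀ (d d' : V × V), d ∈ G.D → d' ∈ G.D → d ≠ d' →
      ∀ x ∈ ((path d).drop 1).dropLast, x ∉ ((path d').drop 1).dropLast := by
    rintro ⟨p, v⟩ ⟨p', v'⟩ hd hd' hne x hx hx'
    rw [hinterior] at hx hx'
    have hz : yc v p ∈ Y v := hzmem p v hd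
    have hz' : yc v' p' ∈ Y v' := hzmem p' v' hd'
    simp only [List.mem_cons, List.mem_map] at hx hx'
    rcases hx with rfl | ⟨u, hu, rfl⟩
    · rcases hx' with hLL | ⟨u', hu', hLR⟩
      · have hq : (Sym2.mk v (yc v p) : Sym2 V) = Sym2.mk v' (yc v' p') := by
          injection hLL
        rw [Sym2.eq_iff] at hq
        rcases hq with ⟨h1, h2⟩ | ⟨h1, h2⟩
        · subst h1
          exact hne (by rw [hzinj v p p' hd hd' h2])
        · refine hmut ⟨v, v', ?_, ?_⟩
          · rw [h1]; exact hz'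
          · rw [← h2]; exact hz
      · simp at hLR
    · rcases hx' with hLL | ⟨u', hu', hLR⟩
      · simp at hLL
      · have hv : v = v' := by
          injection hLR with h1 h2
          exact h1.symm
        subst hv
        have hu2 : u = u' := by
          injection hLR with h1 h2
          exact h2.symm
        subst hu2
        by_cases hzz : yc v p = yc v p'
        · exact hne (by rw [hzinj v p p' hd hd' hzz])
        · have hND := (hnsi v (yc v p) hz (yc v p') hz' hzz).2
          rw [Finset.disjoint_left] at hND
          exact hND (List.mem_toFinset.2 (hrsmem v (yc v p) u hu))
            (List.mem_toFinset.2 (hrsmem v (yc v p') u hu'))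
  -- all single-path properties
  have hall : ∀ d : V × V, d ∈ G.D → (path d).Chain' (flowEdge2 G) ∧
      (path d).head? = some FlowNode2.s ∧ (path d).getLast? = some FlowNode2.t ∧
      2 ≤ (path d).length ∧ (path d).Nodup := by
    rintro ⟨p, v⟩ hd
    refine ⟨hchainp p v hd, rfl, ?_, by simp [hpathdef], hnodupp (p, v)⟩
    rw [hpathdef]
    show (FlowNode2.s :: FlowNode2.L (Sym2.mk v (yc v p)) ::
      ((rs v (yc v p)).map (FlowNode2.R v) ++ [FlowNode2.t])).getLast? = some FlowNode2.t
    rw [show (FlowNode2.s :: FlowNode2.L (Sym2.mk v (yc v p)) ::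
        ((rs v (yc v p)).map (FlowNode2.R v) ++ [FlowNode2.t]))
      = (FlowNode2.s :: FlowNode2.L (Sym2.mk v (yc v p)) ::
        (rs v (yc v p)).map (FlowNode2.R v)) ++ [FlowNode2.t] by simp]
    exact List.getLast?_concat
  -- assemble
  refine ⟨fun i => path ((G.D.equivFin.symm i : { x // x ∈ G.D }) : V × V),
    fun i => hall _ (G.D.equivFin.symm i).2, ?_⟩
  intro i j hij x hx
  have hne : ((G.D.equivFin.symm i : { x // x ∈ G.D }) : V × V)
      ≠ ((G.D.equivFin.symm j : { x // x ∈ G.D }) : V × V) := by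
    intro hcontra
    exact hij (G.D.equivFin.symm.injective (Subtype.ext hcontra))
  exact hdisjp _ _ (G.D.equivFin.symm i).2 (G.D.equivFin.symm j).2 hne x hx

end Aux

/-- A mixed graph `G` is HTC-infinite-to-one if and only if the maximum number of directed
`s`–`t` paths in `G_flow` that are pairwise vertex-disjoint except at `s` and `t` is
strictly less than `|D| = Σ_{v ∈ V} |pa(v)|`. -/
theorem htc_infinite_to_one_maxflow {V : Type*} [Fintype V] [DecidableEq V]
    (G : MixedGraph V) :
    G.HTCInfiniteToOne ↔
      ∀ k, HasDisjointPaths (flowEdge2 G) FlowNode2.s FlowNode2.t k → k < G.D.card := by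
  constructor
  · intro hinf k hpaths
    by_contra hlt
    push_neg at hlt
    obtain ⟨Y, hY, hm⟩ := dir2 G k hpaths hlt
    rcases hinf Y with ⟨v, hv⟩ | hm'
    · exact hv (hY v)
    · exact hm hm'
  · intro hflow Y
    by_contra hcon
    push_neg at hcon
    refine lt_irrefl _ (hflow G.D.card (dir1 G Y hcon.1 ?_))
    rintro ⟨v, w, h1, h2⟩
    exact hcon.2 v w h1 h2
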